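/- For N = 4 and 0 < γ < 1, the points A(γ) = √(1-γ)·(1,1,-1,-1) and B(γ) = √(1-γ)·(1,0,-1,0) are stationary points of V_γ, with V_γ(A) = -(1-γ)² and V_γ(A) < V_γ(B). -/

import Mathlib

open scoped BigOperators
open Real

/-- The potential `V_γ` on `ℝ^N` with periodic boundary conditions. -/
noncomputable def V (N : ℕ) [NeZero N] (γ : ℝ) (x : EuclideanSpace ℝ (ZMod N)) : ℝ :=
  ∑ i : ZMod N, ((x i) ^ 4 / 4 - (x i) ^ 2 / 2) + γ / 4 * ∑ i : ZMod N, (x (i + 1) - x i) ^ 2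

/-- The point `A(γ) = √(1-γ)·(1,1,-1,-1) ∈ ℝ⁴`. -/
noncomputable def ptA (γ : ℝ) : EuclideanSpace ℝ (ZMod 4) :=
  WithLp.toLp 2 (fun i : ZMod 4 => if i.val < 2 then Real.sqrt (1 - γ) else -Real.sqrt (1 - γ))

/-- The point `B(γ) = √(1-γ)·(1,0,-1,0) ∈ ℝ⁴`. -/
noncomputable def ptB (γ : ℝ) : EuclideanSpace ℝ (ZMod 4) :=
  WithLp.toLp 2 (fun i : ZMod 4 => if i = 0 then Real.sqrt (1 - γ) else if i = 2 then -Real.sqrt (1 - γ) else 0)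

noncomputable abbrev pj (i : ZMod 4) : EuclideanSpace ℝ (ZMod 4) →L[ℝ] ℝ :=
  EuclideanSpace.proj i

lemma hasFDeriv_V (γ : ℝ) (x : EuclideanSpace ℝ (ZMod 4)) :
    HasFDerivAt (V 4 γ)
      ((∑ i : ZMod 4, (x i ^ 3 - x i) • pj i)
        + (γ / 4) • ∑ i : ZMod 4,
            ((2 * (x (i + 1) - x i)) • (pj (i + 1) - pj i))) x := by
  apply HasFDerivAt.add
  · apply HasFDerivAt.fun_sum
    intro i _
    have hp : HasFDerivAt (fun y : EuclideanSpace ℝ (ZMod 4) => y i) (pj i) x :=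
      (pj i).hasFDerivAt
    have hd : HasDerivAt (fun t : ℝ => t ^ 4 / 4 - t ^ 2 / 2) (x i ^ 3 - x i) (x i) := by
      have := ((hasDerivAt_pow 4 (x i)).div_const 4).sub ((hasDerivAt_pow 2 (x i)).div_const 2)
      refine this.congr_deriv ?_
      push_cast; ring
    exact hd.comp_hasFDerivAt x hp
  · apply HasFDerivAt.const_mul
    apply HasFDerivAt.fun_sum
    intro i _
    have hp : HasFDerivAt (fun y : EuclideanSpace ℝ (ZMod 4) => y (i+1) - y i)
        (pj (i+1) - pj i) x := (pj (i+1)).hasFDerivAt.sub (pj i).hasFDerivAt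
    have hd : HasDerivAt (fun t : ℝ => t ^ 2) (2 * (x (i+1) - x i)) (x (i+1) - x i) := by
      simpa using hasDerivAt_pow 2 (x (i+1) - x i)
    exact hd.comp_hasFDerivAt x hp

lemma grad_zero (γ : ℝ) (x : EuclideanSpace ℝ (ZMod 4))
    (hx : ∀ v : EuclideanSpace ℝ (ZMod 4),
      (∑ i : ZMod 4, (x i ^ 3 - x i) * v i)
        + γ / 4 * ∑ i : ZMod 4, 2 * (x (i + 1) - x i) * (v (i + 1) - v i) = 0) :
    gradient (V 4 γ) x = 0 := by
  have h := hasFDeriv_V γ x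
  have hL : ((∑ i : ZMod 4, (x i ^ 3 - x i) • pj i)
        + (γ / 4) • ∑ i : ZMod 4,
            ((2 * (x (i + 1) - x i)) • (pj (i + 1) - pj i))) = 0 := by
    apply ContinuousLinearMap.ext
    intro v
    have := hx v
    simp only [ContinuousLinearMap.add_apply, ContinuousLinearMap.coe_sum',
      Finset.sum_apply, ContinuousLinearMap.smul_apply, ContinuousLinearMap.sub_apply,
      ContinuousLinearMap.zero_apply, smul_eq_mul]
    simp only [PiLp.proj_apply]
    rw [Finset.mul_sum] at this ⊢
    rw [← this]
  rw [hL] at h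
  have := h.hasGradientAt
  simpa using this.gradient

lemma sum4 (f : ZMod 4 → ℝ) : ∑ i : ZMod 4, f i = f 0 + f 1 + f 2 + f 3 := by
  have h : (Finset.univ : Finset (ZMod 4)) = {0, 1, 2, 3} := by decide
  rw [h, Finset.sum_insert (by decide), Finset.sum_insert (by decide),
    Finset.sum_insert (by decide), Finset.sum_singleton]
  ring

/-- for `N = 4` and `0 < γ < 1`, `A(γ)` and `B(γ)` are stationary points of
`V_γ`, with `V_γ(A) = -(1-γ)²` and `V_γ(A) < V_γ(B)`. -/
theorem stmt18 (γ : ℝ) (hγ0 : 0 < γ) (hγ1 : γ < 1) :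
    gradient (V 4 γ) (ptA γ) = 0 ∧ gradient (V 4 γ) (ptB γ) = 0 ∧
    V 4 γ (ptA γ) = -(1 - γ) ^ 2 ∧ V 4 γ (ptA γ) < V 4 γ (ptB γ) := by
  set a := Real.sqrt (1 - γ) with ha_def
  have ha : a ^ 2 = 1 - γ := Real.sq_sqrt (by linarith)
  have h01 : (0 : ZMod 4) + 1 = 1 := by decide
  have h11 : (1 : ZMod 4) + 1 = 2 := by decide
  have h21 : (2 : ZMod 4) + 1 = 3 := by decide
  have h31 : (3 : ZMod 4) + 1 = 0 := by decide
  have hA0 : ptA γ 0 = a := rfl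
  have hA1 : ptA γ 1 = a := rfl
  have hA2 : ptA γ 2 = -a := rfl
  have hA3 : ptA γ 3 = -a := rfl
  have hB0 : ptB γ 0 = a := rfl
  have hB1 : ptB γ 1 = 0 := rfl
  have hB2 : ptB γ 2 = -a := rfl
  have hB3 : ptB γ 3 = 0 := rfl
  have hVA : V 4 γ (ptA γ) = -(1 - γ) ^ 2 := by
    rw [V, sum4 (fun i => (ptA γ i) ^ 4 / 4 - (ptA γ i) ^ 2 / 2),
      sum4 (fun i => (ptA γ (i + 1) - ptA γ i) ^ 2)]
    rw [h01, h11, h21, h31]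
    simp only [hA0, hA1, hA2, hA3]
    linear_combination (a ^ 2 - (1 - γ)) * ha
  have hVB : V 4 γ (ptB γ) = -(1 - γ) ^ 2 / 2 := by
    rw [V, sum4 (fun i => (ptB γ i) ^ 4 / 4 - (ptB γ i) ^ 2 / 2),
      sum4 (fun i => (ptB γ (i + 1) - ptB γ i) ^ 2)]
    rw [h01, h11, h21, h31]
    simp only [hB0, hB1, hB2, hB3]
    linear_combination (a ^ 2 / 2 - (1 - γ) / 2) * ha
  refine ⟨?_, ?_, hVA, ?_⟩
  · apply grad_zero
    intro v
    rw [sum4 (fun i => (ptA γ i ^ 3 - ptA γ i) * v i),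
      sum4 (fun i => 2 * (ptA γ (i + 1) - ptA γ i) * (v (i + 1) - v i))]
    rw [h01, h11, h21, h31]
    simp only [hA0, hA1, hA2, hA3]
    linear_combination (a * (v 0 + v 1 - v 2 - v 3)) * ha
  · apply grad_zero
    intro v
    rw [sum4 (fun i => (ptB γ i ^ 3 - ptB γ i) * v i),
      sum4 (fun i => 2 * (ptB γ (i + 1) - ptB γ i) * (v (i + 1) - v i))]
    rw [h01, h11, h21, h31]
    simp only [hB0, hB1, hB2, hB3]
    linear_combination (a * (v 0 - v 2)) * ha
  · rw [hVA, hVB]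
    nlinarith [sq_nonneg (1 - γ), hγ1]
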